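/- Let $L$ be a lower triangular $q \times q$ real matrix with $L_{ii} = 1$ for all $i$ and $|L_{ij}| \le 1$ for all $i > j$. Then the entries of $L^{-1}$ satisfy $|(L^{-1})_{ij}| \le 2^{i-j-1}$ for $i > j$, and $(L^{-1})_{ii} = 1$. -/

import Mathlib

open Finset Matrix

theorem unit_lower_triangular_inverse_bound {q : ℕ}
    (L : Matrix (Fin q) (Fin q) ℝ)
    (htri : ∀ i j : Fin q, i < j → L i j = 0)
    (hdiag : ∀ i : Fin q, L i i = 1)
    (hentries : ∀ i j : Fin q, j < i → |L i j| ≤ 1) :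
    (∀ i j : Fin q, j < i → |L⁻¹ i j| ≤ 2 ^ ((i : ℕ) - (j : ℕ) - 1)) ∧
    (∀ i : Fin q, L⁻¹ i i = 1) := by
  have hdet : L.det = 1 := by
    rw [Matrix.det_of_lowerTriangular L (fun i j h => htri i j h)]
    simp [hdiag]
  have hM : L * L⁻¹ = 1 := Matrix.mul_nonsing_inv L (by simp [hdet])
  set M := L⁻¹ with hMdef
  have hrec : ∀ i j : Fin q,
      M i j = (if i = j then (1:ℝ) else 0) - ∑ k ∈ Finset.Iio i, L i k * M k j := by
    intro i j
    have h := congrFun (congrFun hM i) j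
    rw [Matrix.mul_apply, Matrix.one_apply] at h
    have hsub : ∑ k, L i k * M k j = ∑ k ∈ Finset.Iic i, L i k * M k j := by
      refine (Finset.sum_subset (Finset.subset_univ _) ?_).symm
      intro k _ hk
      rw [htri i k (by simpa using hk)]; ring
    rw [hsub, ← Finset.Iio_insert, Finset.sum_insert (by simp), hdiag i, one_mul] at h
    linarith [h]
  have key : ∀ n : ℕ, ∀ i : Fin q, (i : ℕ) ≤ n → ∀ j : Fin q,
      (i < j → M i j = 0) ∧ (M i i = 1) ∧
      (j < i → |M i j| ≤ 2 ^ ((i : ℕ) - (j : ℕ) - 1)) := by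
    intro n
    induction n with
    | zero =>
      intro i hi j
      have hIio : Finset.Iio i = ∅ := by
        ext k; simp [Fin.lt_def, Nat.le_zero.mp hi]
      refine ⟨fun hij => ?_, ?_, fun hij =>
        absurd (Nat.lt_of_lt_of_le hij hi) (Nat.not_lt_zero _)⟩
      · rw [hrec, hIio]; simp [Fin.ne_of_lt hij]
      · rw [hrec, hIio]; simp
    | succ n ih =>
      intro i hi j
      rcases Nat.lt_or_ge (i : ℕ) (n+1) with h | h
      · exact ih i (Nat.lt_succ_iff.mp h) j
      have hIH : ∀ k : Fin q, k < i → ∀ j' : Fin q,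
          (k < j' → M k j' = 0) ∧ (M k k = 1) ∧
          (j' < k → |M k j'| ≤ 2 ^ ((k : ℕ) - (j' : ℕ) - 1)) := by
        intro k hk
        exact ih k (by have := Fin.lt_def.mp hk; omega)
      refine ⟨fun hij => ?_, ?_, fun hij => ?_⟩
      · rw [hrec]
        rw [Finset.sum_eq_zero (fun k hk => by
          rw [(hIH k (Finset.mem_Iio.mp hk) j).1 (lt_trans (Finset.mem_Iio.mp hk) hij)]; ring)]
        simp [Fin.ne_of_lt hij]
      · rw [hrec]
        rw [Finset.sum_eq_zero (fun k hk => by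
          rw [(hIH k (Finset.mem_Iio.mp hk) i).1 (Finset.mem_Iio.mp hk)]; ring)]
        simp
      · -- j < i
        have hsum2 : ∑ k ∈ Finset.Iio i, L i k * M k j
            = ∑ k ∈ Finset.Ico j i, L i k * M k j := by
          refine (Finset.sum_subset ?_ ?_).symm
          · intro k hk
            exact Finset.mem_Iio.mpr (Finset.mem_Ico.mp hk).2
          · intro k hk1 hk2
            have hkj : k < j := by
              rcases Finset.mem_Ico.not.mp hk2 with h'
              have := Finset.mem_Iio.mp hk1
              by_contra hc
              exact h' ⟨not_lt.mp hc, this⟩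
            rw [(hIH k (lt_trans hkj hij) j).1 hkj]; ring
        rw [hrec, hsum2, if_neg (ne_of_gt hij), zero_sub,
          ← Finset.Ioo_insert_left hij, Finset.sum_insert (by simp),
          (hIH j hij j).2.1, mul_one, abs_neg]
        have hbound : ∀ k ∈ Finset.Ioo j i, |L i k * M k j| ≤ 2 ^ ((k : ℕ) - (j : ℕ) - 1) := by
          intro k hk
          rcases Finset.mem_Ioo.mp hk with ⟨hjk, hki⟩
          rw [abs_mul]
          calc |L i k| * |M k j| ≤ 1 * (2 ^ ((k : ℕ) - (j : ℕ) - 1)) := by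
                apply mul_le_mul (hentries i k hki) ((hIH k hki j).2.2 hjk)
                  (abs_nonneg _) zero_le_one
            _ = 2 ^ ((k : ℕ) - (j : ℕ) - 1) := one_mul _
        have hgeo : ∑ k ∈ Finset.Ioo j i, (2:ℝ) ^ ((k : ℕ) - (j : ℕ) - 1)
            = 2 ^ ((i : ℕ) - (j : ℕ) - 1) - 1 := by
          have hmap : ∑ k ∈ Finset.Ioo j i, (2:ℝ) ^ ((k : ℕ) - (j : ℕ) - 1)
              = ∑ t ∈ Finset.Ioo (j:ℕ) (i:ℕ), (2:ℝ) ^ (t - (j:ℕ) - 1) := by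
            rw [← Fin.map_valEmbedding_Ioo, Finset.sum_map]
            rfl
          rw [hmap]
          have : ∑ t ∈ Finset.Ioo (j:ℕ) (i:ℕ), (2:ℝ) ^ (t - (j:ℕ) - 1)
              = ∑ s ∈ Finset.range ((i:ℕ) - (j:ℕ) - 1), (2:ℝ) ^ s := by
            rw [← Finset.Ico_add_one_left_eq_Ioo, Finset.sum_Ico_eq_sum_range]
            have hc : (i:ℕ) - ((j:ℕ)+1) = (i:ℕ) - (j:ℕ) - 1 := by omega
            rw [hc]
            exact Finset.sum_congr rfl (fun s _ => by congr 1; omega)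
          rw [this, geom_sum_eq (by norm_num : (2:ℝ) ≠ 1)]
          ring
        calc |(L i j + ∑ k ∈ Finset.Ioo j i, L i k * M k j)|
            ≤ |L i j| + |∑ k ∈ Finset.Ioo j i, L i k * M k j| := abs_add_le _ _
          _ ≤ 1 + ∑ k ∈ Finset.Ioo j i, |L i k * M k j| := by
              gcongr
              · exact hentries i j hij
              · exact Finset.abs_sum_le_sum_abs _ _
          _ ≤ 1 + ∑ k ∈ Finset.Ioo j i, (2:ℝ) ^ ((k : ℕ) - (j : ℕ) - 1) := by
              gcongr with k hk
              exact hbound k hk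
          _ = 2 ^ ((i : ℕ) - (j : ℕ) - 1) := by rw [hgeo]; ring
  exact ⟨fun i j hij => (key (i:ℕ) i le_rfl j).2.2 hij,
    fun i => (key (i:ℕ) i le_rfl i).2.1⟩
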